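/- Consider the differential-algebraic system A(x)ẍ = F(t,x,ẋ) + (∇_ẋφ(t,x,ẋ))ᵀλ, φ(t,x,ẋ) = 0, where A : ℝⁿ → ℝ^{n×n}, F : ℝ×ℝⁿ×ℝⁿ → ℝⁿ and φ : ℝ×ℝⁿ×ℝⁿ → ℝᵐ (m ≤ n) are smooth on a neighborhood of a point (t₀,x₀,ẋ₀). Assume (i) ⟨A(x₀)z, z⟩ > 0 for every nonzero z in the kernel of the partial derivative ∇_ẋφ(t₀,x₀,ẋ₀); (ii) φ(t₀,x₀,ẋ₀) = 0; (iii) rank ∇_ẋφ(t₀,x₀,ẋ₀) = m. Then there exists δ > 0 such that there is a unique pair (x(t), λ(t)), with x twice continuously differentiable and λ continuous on |t−t₀| < δ, satisfying A(x(t))ẍ(t) = F(t,x(t),ẋ(t)) + (∇_ẋφ(t,x(t),ẋ(t)))ᵀλ(t) and φ(t,x(t),ẋ(t)) = 0 for all |t−t₀| < δ, together with the initial conditions x(t₀) = x₀, ẋ(t₀) = ẋ₀. Moreover, along this solution the full-rank condition rank ∇_ẋφ(t,x(t),ẋ(t)) = m holds for all |t−t₀| < δ. -/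

import Mathlib

open Matrix Metric

/-- The `m × n` Jacobian matrix `∇_ẋφ(t,x,v)` of `φ` with respect to its third
(velocity) argument. -/
noncomputable def velJacobian {n m : ℕ}
    (φ : ℝ → (Fin n → ℝ) → (Fin n → ℝ) → (Fin m → ℝ))
    (t : ℝ) (x v : Fin n → ℝ) : Matrix (Fin m) (Fin n) ℝ :=
  Matrix.of fun α i => fderiv ℝ (fun w => φ t x w α) v (Pi.single i 1)



section MatrixSmooth

variable {E' : Type*} [NormedAddCommGroup E'] [NormedSpace ℝ E']
variable {ι : Type*} [Fintype ι] [DecidableEq ι] {s : Set E'}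

lemma contDiffOn_matrix_det {N : E' → Matrix ι ι ℝ}
    (h : ∀ i j, ContDiffOn ℝ (⊤ : ℕ∞) (fun p => N p i j) s) :
    ContDiffOn ℝ (⊤ : ℕ∞) (fun p => (N p).det) s := by
  simp only [Matrix.det_apply']
  apply ContDiffOn.sum
  intro σ _
  apply ContDiffOn.mul contDiffOn_const
  exact contDiffOn_prod fun i _ => h (σ i) i

lemma contDiffOn_matrix_inv {N : E' → Matrix ι ι ℝ}
    (h : ∀ i j, ContDiffOn ℝ (⊤ : ℕ∞) (fun p => N p i j) s)
    (hdet : ∀ p ∈ s, (N p).det ≠ 0) :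
    ∀ i j, ContDiffOn ℝ (⊤ : ℕ∞) (fun p => (N p)⁻¹ i j) s := by
  intro i j
  have hadj : ContDiffOn ℝ (⊤ : ℕ∞) (fun p => (N p).adjugate i j) s := by
    simp only [Matrix.adjugate_apply]
    apply contDiffOn_matrix_det
    intro k l
    by_cases hk : k = j
    · subst hk
      simp only [Matrix.updateRow_self]
      exact contDiffOn_const
    · simp only [Matrix.updateRow_ne hk]
      exact h k l
  have : ContDiffOn ℝ (⊤ : ℕ∞) (fun p => ((N p).det)⁻¹ * (N p).adjugate i j) s :=
    ((contDiffOn_matrix_det h).inv hdet).mul hadj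
  refine this.congr fun p hp => ?_
  rw [Matrix.inv_def, Ring.inverse_eq_inv']
  simp [Matrix.smul_apply, smul_eq_mul]

end MatrixSmooth

section RankLemmas

variable {m n : ℕ}

lemma surjective_mulVec_of_rank (G : Matrix (Fin m) (Fin n) ℝ) (hrank : G.rank = m) :
    Function.Surjective G.mulVec := by
  have h2 : LinearMap.range G.mulVecLin = ⊤ := by
    apply Submodule.eq_top_of_finrank_eq
    rw [← Matrix.rank, hrank, Module.finrank_pi]
    simp
  have h3 : Function.Surjective G.mulVecLin := LinearMap.range_eq_top.1 h2
  intro y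
  obtain ⟨w, hw⟩ := h3 y
  exact ⟨w, by simpa [Matrix.mulVecLin_apply] using hw⟩

lemma transpose_mulVec_eq_zero_of_surj {G : Matrix (Fin m) (Fin n) ℝ}
    (hsurj : Function.Surjective G.mulVec) {μ : Fin m → ℝ} (hμ : Gᵀ *ᵥ μ = 0) : μ = 0 := by
  obtain ⟨w, hw⟩ := hsurj μ
  have h0 : μ ⬝ᵥ μ = (Gᵀ *ᵥ μ) ⬝ᵥ w := by
    rw [Matrix.mulVec_transpose, ← Matrix.dotProduct_mulVec, hw]
  rw [hμ, zero_dotProduct] at h0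
  exact dotProduct_self_eq_zero.mp h0

lemma gram_det_ne_zero_of_rank (G : Matrix (Fin m) (Fin n) ℝ) (hrank : G.rank = m) :
    (G * Gᵀ).det ≠ 0 := by
  have hsurj := surjective_mulVec_of_rank G hrank
  have hunit : IsUnit (G * Gᵀ) := by
    rw [← Matrix.mulVec_injective_iff_isUnit]
    have : ∀ μ, (G * Gᵀ) *ᵥ μ = 0 → μ = 0 := by
      intro μ h0
      apply transpose_mulVec_eq_zero_of_surj hsurj
      have h1 : (Gᵀ *ᵥ μ) ⬝ᵥ (Gᵀ *ᵥ μ) = 0 :=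
        calc (Gᵀ *ᵥ μ) ⬝ᵥ (Gᵀ *ᵥ μ) = ((Gᵀ *ᵥ μ) ᵥ* Gᵀ) ⬝ᵥ μ := Matrix.dotProduct_mulVec _ _ _
          _ = (G *ᵥ (Gᵀ *ᵥ μ)) ⬝ᵥ μ := by rw [Matrix.vecMul_transpose]
          _ = ((G * Gᵀ) *ᵥ μ) ⬝ᵥ μ := by rw [Matrix.mulVec_mulVec]
          _ = 0 := by rw [h0, zero_dotProduct]
      exact dotProduct_self_eq_zero.mp h1
    intro μ₁ μ₂ h12
    have := this (μ₁ - μ₂) (by rw [Matrix.mulVec_sub, h12, sub_self])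
    exact sub_eq_zero.mp this
  exact ((Matrix.isUnit_iff_isUnit_det _).mp hunit).ne_zero

lemma rank_eq_of_gram_det {G : Matrix (Fin m) (Fin n) ℝ} (h : (G * Gᵀ).det ≠ 0) :
    G.rank = m := by
  have hunit : IsUnit (G * Gᵀ).det := isUnit_iff_ne_zero.mpr h
  have hsurj : Function.Surjective G.mulVec := by
    intro y
    refine ⟨Gᵀ *ᵥ ((G * Gᵀ)⁻¹ *ᵥ y), ?_⟩
    rw [Matrix.mulVec_mulVec, Matrix.mulVec_mulVec, Matrix.mul_nonsing_inv _ hunit,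
      Matrix.one_mulVec]
  rw [Matrix.rank, LinearMap.range_eq_top.2 hsurj, finrank_top, Module.finrank_pi]
  simp

end RankLemmas

noncomputable section DAESetup

variable {n m : ℕ}

abbrev EE (n : ℕ) := ℝ × (Fin n → ℝ) × (Fin n → ℝ)

def Phi (φ : ℝ → (Fin n → ℝ) → (Fin n → ℝ) → (Fin m → ℝ)) : EE n → (Fin m → ℝ) :=
  fun p => φ p.1 p.2.1 p.2.2

/-- the continuous linear inclusion `w ↦ (0,0,w)` -/
def inclL (n : ℕ) : (Fin n → ℝ) →L[ℝ] EE n :=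
  (0 : (Fin n → ℝ) →L[ℝ] ℝ).prod ((0 : (Fin n → ℝ) →L[ℝ] (Fin n → ℝ)).prod
    (ContinuousLinearMap.id ℝ (Fin n → ℝ)))

@[simp] lemma inclL_apply (w : Fin n → ℝ) : inclL n w = ((0 : ℝ), (0 : Fin n → ℝ), w) := rfl

lemma hasFDerivAt_incl (t : ℝ) (x v : Fin n → ℝ) :
    HasFDerivAt (fun w : Fin n → ℝ => ((t, x, w) : EE n)) (inclL n) v :=
  (hasFDerivAt_const t v).prodMk ((hasFDerivAt_const x v).prodMk (hasFDerivAt_id v))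

/-- matrix of the velocity-partial-derivatives of `Φ` -/
def Gmat (φ : ℝ → (Fin n → ℝ) → (Fin n → ℝ) → (Fin m → ℝ)) (p : EE n) :
    Matrix (Fin m) (Fin n) ℝ :=
  Matrix.of fun α i => fderiv ℝ (Phi φ) p ((0 : ℝ), (0 : Fin n → ℝ), Pi.single i 1) α

/-- any continuous linear map into `Fin m → ℝ`, evaluated on third-component vectors,
is given by the associated matrix -/
lemma clm_third_eq_mulVec (T : EE n →L[ℝ] (Fin m → ℝ)) (a : Fin n → ℝ) :
    T ((0 : ℝ), (0 : Fin n → ℝ), a) =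
      (Matrix.of fun α i => T ((0 : ℝ), (0 : Fin n → ℝ), Pi.single i 1) α) *ᵥ a := by
  have ha : a = ∑ i : Fin n, a i • (Pi.single i (1 : ℝ) : Fin n → ℝ) := by
    funext j
    simp [Finset.sum_apply, Pi.single_apply, eq_comm]
  have key : T ((0 : ℝ), (0 : Fin n → ℝ), a) = (T.comp (inclL n)) a := rfl
  rw [key]
  nth_rewrite 1 [ha]
  rw [map_sum]
  simp only [_root_.map_smul]
  funext α
  simp only [Finset.sum_apply, Pi.smul_apply, smul_eq_mul]
  simp [Matrix.mulVec, dotProduct, mul_comm, ContinuousLinearMap.comp_apply]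

lemma velJacobian_eq_Gmat {φ : ℝ → (Fin n → ℝ) → (Fin n → ℝ) → (Fin m → ℝ)}
    {U : Set (EE n)} (hU : IsOpen U)
    (hφ : ContDiffOn ℝ (⊤ : ℕ∞) (Phi φ) U) {p : EE n} (hp : p ∈ U) :
    velJacobian φ p.1 p.2.1 p.2.2 = Gmat φ p := by
  have hdiff : DifferentiableAt ℝ (Phi φ) p :=
    ((hφ.contDiffAt (hU.mem_nhds hp)).differentiableAt (by norm_num))
  funext α i
  show fderiv ℝ (fun w => φ p.1 p.2.1 w α) p.2.2 (Pi.single i 1)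
      = fderiv ℝ (Phi φ) p ((0 : ℝ), (0 : Fin n → ℝ), Pi.single i 1) α
  have hcomp : HasFDerivAt (fun w => φ p.1 p.2.1 w α)
      ((ContinuousLinearMap.proj α).comp ((fderiv ℝ (Phi φ) p).comp (inclL n))) p.2.2 := by
    have h1 : HasFDerivAt (Phi φ) (fderiv ℝ (Phi φ) p) p := hdiff.hasFDerivAt
    have h2 : HasFDerivAt (fun w : Fin n → ℝ => Phi φ (p.1, p.2.1, w))
        ((fderiv ℝ (Phi φ) p).comp (inclL n)) p.2.2 := by
      have := h1.comp p.2.2 (hasFDerivAt_incl p.1 p.2.1 p.2.2)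
      simpa using this
    exact ((ContinuousLinearMap.proj α).hasFDerivAt.comp p.2.2 h2 :)
  rw [hcomp.fderiv]
  rfl

variable {φ : ℝ → (Fin n → ℝ) → (Fin n → ℝ) → (Fin m → ℝ)}
variable (A : (Fin n → ℝ) → Matrix (Fin n) (Fin n) ℝ)
variable (F : ℝ → (Fin n → ℝ) → (Fin n → ℝ) → (Fin n → ℝ))

def cvec (φ : ℝ → (Fin n → ℝ) → (Fin n → ℝ) → (Fin m → ℝ)) (p : EE n) : Fin m → ℝ :=
  fun α => -(fderiv ℝ (Phi φ) p ((1 : ℝ), p.2.2, (0 : Fin n → ℝ)) α)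

def Mmat (A : (Fin n → ℝ) → Matrix (Fin n) (Fin n) ℝ)
    (φ : ℝ → (Fin n → ℝ) → (Fin n → ℝ) → (Fin m → ℝ)) (p : EE n) :
    Matrix (Fin n ⊕ Fin m) (Fin n ⊕ Fin m) ℝ :=
  Matrix.fromBlocks (A p.2.1) (-(Gmat φ p)ᵀ) (Gmat φ p) 0

def rvec (F : ℝ → (Fin n → ℝ) → (Fin n → ℝ) → (Fin n → ℝ))
    (φ : ℝ → (Fin n → ℝ) → (Fin n → ℝ) → (Fin m → ℝ)) (p : EE n) : Fin n ⊕ Fin m → ℝ :=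
  Sum.elim (F p.1 p.2.1 p.2.2) (cvec φ p)

def solv (A : (Fin n → ℝ) → Matrix (Fin n) (Fin n) ℝ)
    (F : ℝ → (Fin n → ℝ) → (Fin n → ℝ) → (Fin n → ℝ))
    (φ : ℝ → (Fin n → ℝ) → (Fin n → ℝ) → (Fin m → ℝ)) (p : EE n) : Fin n ⊕ Fin m → ℝ :=
  (Mmat A φ p)⁻¹ *ᵥ rvec F φ p

def fvec (A : (Fin n → ℝ) → Matrix (Fin n) (Fin n) ℝ)
    (F : ℝ → (Fin n → ℝ) → (Fin n → ℝ) → (Fin n → ℝ))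
    (φ : ℝ → (Fin n → ℝ) → (Fin n → ℝ) → (Fin m → ℝ)) (p : EE n) : Fin n → ℝ :=
  fun i => solv A F φ p (Sum.inl i)

def lamvec (A : (Fin n → ℝ) → Matrix (Fin n) (Fin n) ℝ)
    (F : ℝ → (Fin n → ℝ) → (Fin n → ℝ) → (Fin n → ℝ))
    (φ : ℝ → (Fin n → ℝ) → (Fin n → ℝ) → (Fin m → ℝ)) (p : EE n) : Fin m → ℝ :=
  fun α => solv A F φ p (Sum.inr α)

def gvec (A : (Fin n → ℝ) → Matrix (Fin n) (Fin n) ℝ)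
    (F : ℝ → (Fin n → ℝ) → (Fin n → ℝ) → (Fin n → ℝ))
    (φ : ℝ → (Fin n → ℝ) → (Fin n → ℝ) → (Fin m → ℝ)) (p : EE n) : EE n :=
  ((1 : ℝ), p.2.2, fvec A F φ p)

lemma solv_eq_elim (p : EE n) :
    solv A F φ p = Sum.elim (fvec A F φ p) (lamvec A F φ p) := by
  funext k; cases k <;> rfl

/-- splitting a directional derivative of `Phi` -/
lemma clm_split (T : EE n →L[ℝ] (Fin m → ℝ)) (v a : Fin n → ℝ) :
    T ((1 : ℝ), v, a) = T ((1 : ℝ), v, (0 : Fin n → ℝ))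
      + (Matrix.of fun α i => T ((0 : ℝ), (0 : Fin n → ℝ), Pi.single i 1) α) *ᵥ a := by
  rw [← clm_third_eq_mulVec, ← map_add]
  congr 1
  refine Prod.ext ?_ (Prod.ext ?_ ?_) <;> simp

/-- the block identities for the solution of the KKT system -/
lemma Mmat_blocks {p : EE n} (hdet : (Mmat A φ p).det ≠ 0) :
    A p.2.1 *ᵥ fvec A F φ p = F p.1 p.2.1 p.2.2 + (Gmat φ p)ᵀ *ᵥ lamvec A F φ p ∧
    Gmat φ p *ᵥ fvec A F φ p = cvec φ p := by
  have hMsol : Mmat A φ p *ᵥ solv A F φ p = rvec F φ p := by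
    rw [solv, Matrix.mulVec_mulVec, Matrix.mul_nonsing_inv _ (isUnit_iff_ne_zero.mpr hdet),
      Matrix.one_mulVec]
  rw [solv_eq_elim] at hMsol
  rw [Mmat, Matrix.fromBlocks_mulVec] at hMsol
  constructor
  · have h1 := congrArg (fun u => u ∘ Sum.inl) hMsol
    have h1' : A p.2.1 *ᵥ fvec A F φ p + (-(Gmat φ p)ᵀ) *ᵥ lamvec A F φ p
        = F p.1 p.2.1 p.2.2 := by
      funext i; exact congrFun h1 i
    rw [Matrix.neg_mulVec] at h1'
    have := congrArg (fun u => u + (Gmat φ p)ᵀ *ᵥ lamvec A F φ p) h1'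
    simpa [add_assoc] using this
  · have h2 := congrArg (fun u => u ∘ Sum.inr) hMsol
    funext α
    have := congrFun h2 α
    simpa [Matrix.zero_mulVec, rvec] using this

/-- uniqueness of the KKT solution -/
lemma Mmat_unique {p : EE n} (hdet : (Mmat A φ p).det ≠ 0) {u : Fin n ⊕ Fin m → ℝ}
    (hu : Mmat A φ p *ᵥ u = rvec F φ p) : u = solv A F φ p := by
  have : (Mmat A φ p)⁻¹ *ᵥ (Mmat A φ p *ᵥ u) = (Mmat A φ p)⁻¹ *ᵥ rvec F φ p := by rw [hu]
  rwa [Matrix.mulVec_mulVec, Matrix.nonsing_inv_mul _ (isUnit_iff_ne_zero.mpr hdet),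
    Matrix.one_mulVec] at this

section Smoothness

variable {U : Set (EE n)}

lemma contDiffOn_Gmat_entry (hU : IsOpen U) (hφ : ContDiffOn ℝ (⊤ : ℕ∞) (Phi φ) U)
    (α : Fin m) (i : Fin n) : ContDiffOn ℝ (⊤ : ℕ∞) (fun p => Gmat φ p α i) U := by
  have hDφ : ContDiffOn ℝ (⊤ : ℕ∞) (fun p => fderiv ℝ (Phi φ) p) U :=
    hφ.fderiv_of_isOpen hU (le_of_eq rfl)
  have h1 : ContDiffOn ℝ (⊤ : ℕ∞)
      (fun p => fderiv ℝ (Phi φ) p ((0 : ℝ), (0 : Fin n → ℝ), Pi.single i 1)) U :=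
    hDφ.clm_apply contDiffOn_const
  exact contDiffOn_pi.mp h1 α

lemma contDiffOn_cvec (hU : IsOpen U) (hφ : ContDiffOn ℝ (⊤ : ℕ∞) (Phi φ) U) :
    ContDiffOn ℝ (⊤ : ℕ∞) (cvec φ) U := by
  have hDφ : ContDiffOn ℝ (⊤ : ℕ∞) (fun p => fderiv ℝ (Phi φ) p) U :=
    hφ.fderiv_of_isOpen hU (le_of_eq rfl)
  have harg : ContDiffOn ℝ (⊤ : ℕ∞) (fun p : EE n => ((1 : ℝ), p.2.2, (0 : Fin n → ℝ))) U :=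
    (contDiff_const.prodMk ((contDiff_snd.comp contDiff_snd).prodMk contDiff_const)).contDiffOn
  have h1 := hDφ.clm_apply harg
  exact h1.neg

lemma contDiffOn_Mmat_entry (hU : IsOpen U) (hφ : ContDiffOn ℝ (⊤ : ℕ∞) (Phi φ) U)
    (hA : ContDiffOn ℝ (⊤ : ℕ∞) (fun p : EE n => fun i j => A p.2.1 i j) U)
    (k l : Fin n ⊕ Fin m) : ContDiffOn ℝ (⊤ : ℕ∞) (fun p => Mmat A φ p k l) U := by
  cases k with
  | inl i =>
    cases l with
    | inl j =>
      simp only [Mmat, Matrix.fromBlocks_apply₁₁]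
      exact contDiffOn_pi.mp (contDiffOn_pi.mp hA i) j
    | inr β =>
      simp only [Mmat, Matrix.fromBlocks_apply₁₂, Matrix.neg_apply, Matrix.transpose_apply]
      exact (contDiffOn_Gmat_entry hU hφ β i).neg
  | inr α =>
    cases l with
    | inl j =>
      simp only [Mmat, Matrix.fromBlocks_apply₂₁]
      exact contDiffOn_Gmat_entry hU hφ α j
    | inr β =>
      simp only [Mmat, Matrix.fromBlocks_apply₂₂, Matrix.zero_apply]
      exact contDiffOn_const

lemma contDiffOn_solv (hU : IsOpen U) (hφ : ContDiffOn ℝ (⊤ : ℕ∞) (Phi φ) U)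
    (hA : ContDiffOn ℝ (⊤ : ℕ∞) (fun p : EE n => fun i j => A p.2.1 i j) U)
    (hF : ContDiffOn ℝ (⊤ : ℕ∞) (fun p : EE n => F p.1 p.2.1 p.2.2) U)
    {V : Set (EE n)} (hVU : V ⊆ U)
    (hdet : ∀ p ∈ V, (Mmat A φ p).det ≠ 0) (k : Fin n ⊕ Fin m) :
    ContDiffOn ℝ (⊤ : ℕ∞) (fun p => solv A F φ p k) V := by
  have hMinv := contDiffOn_matrix_inv
    (fun k' l => (contDiffOn_Mmat_entry A hU hφ hA k' l).mono hVU) hdet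
  have hrv : ∀ l, ContDiffOn ℝ (⊤ : ℕ∞) (fun p => rvec F φ p l) V := by
    intro l
    cases l with
    | inl i => exact (contDiffOn_pi.mp hF i).mono hVU
    | inr α => exact (contDiffOn_pi.mp (contDiffOn_cvec hU hφ) α).mono hVU
  have heq : (fun p => solv A F φ p k) = fun p => ∑ l, (Mmat A φ p)⁻¹ k l * rvec F φ p l := by
    funext p; simp [solv, Matrix.mulVec, dotProduct]
  rw [heq]
  exact ContDiffOn.sum fun l _ => (hMinv k l).mul (hrv l)

lemma contDiffOn_gvec (hU : IsOpen U) (hφ : ContDiffOn ℝ (⊤ : ℕ∞) (Phi φ) U)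
    (hA : ContDiffOn ℝ (⊤ : ℕ∞) (fun p : EE n => fun i j => A p.2.1 i j) U)
    (hF : ContDiffOn ℝ (⊤ : ℕ∞) (fun p : EE n => F p.1 p.2.1 p.2.2) U)
    {V : Set (EE n)} (hVU : V ⊆ U)
    (hdet : ∀ p ∈ V, (Mmat A φ p).det ≠ 0) :
    ContDiffOn ℝ (⊤ : ℕ∞) (gvec A F φ) V := by
  have hf : ContDiffOn ℝ (⊤ : ℕ∞) (fvec A F φ) V :=
    contDiffOn_pi.mpr fun i => contDiffOn_solv A F hU hφ hA hF hVU hdet (Sum.inl i)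
  exact contDiffOn_const.prodMk (((contDiff_snd.comp contDiff_snd).contDiffOn).prodMk hf)

end Smoothness

section CurveLemmas

variable {E' F' : Type*} [NormedAddCommGroup E'] [NormedSpace ℝ E']
  [NormedAddCommGroup F'] [NormedSpace ℝ F']

lemma HasDerivAt.fst' {y : ℝ → E' × F'} {d : E' × F'} {t : ℝ} (h : HasDerivAt y d t) :
    HasDerivAt (fun s => (y s).1) d.1 t :=
  ((ContinuousLinearMap.fst ℝ E' F').hasFDerivAt.comp_hasDerivAt t h :)

lemma HasDerivAt.snd' {y : ℝ → E' × F'} {d : E' × F'} {t : ℝ} (h : HasDerivAt y d t) :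
    HasDerivAt (fun s => (y s).2) d.2 t :=
  ((ContinuousLinearMap.snd ℝ E' F').hasFDerivAt.comp_hasDerivAt t h :)

/-- a function with vanishing derivative on a ball is constant there -/
lemma eq_of_hasDerivAt_zero {h : ℝ → F'} {c δ : ℝ}
    (hd : ∀ t ∈ ball c δ, HasDerivAt h 0 t) {t : ℝ} (ht : t ∈ ball c δ) (hδ : 0 < δ) :
    h t = h c := by
  have hb : ∀ s ∈ ball c δ, HasDerivWithinAt h 0 (ball c δ) s :=
    fun s hs => (hd s hs).hasDerivWithinAt
  have := Convex.norm_image_sub_le_of_norm_hasDerivWithin_le (C := 0) (f' := fun _ => 0) hb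
    (fun s _ => by simp) (convex_ball c δ) (mem_ball_self hδ) ht
  have h0 : ‖h t - h c‖ ≤ 0 := by simpa using this
  have := norm_nonneg (h t - h c)
  have : ‖h t - h c‖ = 0 := le_antisymm h0 this
  rwa [norm_eq_zero, sub_eq_zero] at this

end CurveLemmas

end DAESetup

/-- Local existence and uniqueness for the differential-algebraic system
`A(x)ẍ = F(t,x,ẋ) + (∇_ẋφ(t,x,ẋ))ᵀλ`, `φ(t,x,ẋ) = 0`, under positive definiteness of
`A(x₀)` on `ker ∇_ẋφ(t₀,x₀,ẋ₀)`, admissibility of the initial data, and the full rank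
condition on `∇_ẋφ(t₀,x₀,ẋ₀)`; along the solution the full-rank condition persists. -/
theorem dae_local_existence_uniqueness {n m : ℕ} (hmn : m ≤ n)
    (t₀ : ℝ) (x₀ v₀ : Fin n → ℝ)
    (A : (Fin n → ℝ) → Matrix (Fin n) (Fin n) ℝ)
    (F : ℝ → (Fin n → ℝ) → (Fin n → ℝ) → (Fin n → ℝ))
    (φ : ℝ → (Fin n → ℝ) → (Fin n → ℝ) → (Fin m → ℝ))
    (U : Set (ℝ × (Fin n → ℝ) × (Fin n → ℝ))) (hU : IsOpen U)
    (hmem : (t₀, x₀, v₀) ∈ U)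
    (hA : ContDiffOn ℝ (⊤ : ℕ∞)
      (fun p : ℝ × (Fin n → ℝ) × (Fin n → ℝ) => fun i j => A p.2.1 i j) U)
    (hF : ContDiffOn ℝ (⊤ : ℕ∞)
      (fun p : ℝ × (Fin n → ℝ) × (Fin n → ℝ) => F p.1 p.2.1 p.2.2) U)
    (hφ : ContDiffOn ℝ (⊤ : ℕ∞)
      (fun p : ℝ × (Fin n → ℝ) × (Fin n → ℝ) => φ p.1 p.2.1 p.2.2) U)
    (hpos : ∀ z : Fin n → ℝ, z ≠ 0 → velJacobian φ t₀ x₀ v₀ *ᵥ z = 0 →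
      0 < z ⬝ᵥ (A x₀ *ᵥ z))
    (hinit : φ t₀ x₀ v₀ = 0)
    (hrank : (velJacobian φ t₀ x₀ v₀).rank = m) :
    ∃ δ > (0 : ℝ), ∃ (x : ℝ → Fin n → ℝ) (lam : ℝ → Fin m → ℝ),
      (ContDiffOn ℝ 2 x (ball t₀ δ) ∧ ContinuousOn lam (ball t₀ δ) ∧
        (∀ t ∈ ball t₀ δ,
          A (x t) *ᵥ deriv (deriv x) t =
            F t (x t) (deriv x t) + (velJacobian φ t (x t) (deriv x t))ᵀ *ᵥ lam t ∧
          φ t (x t) (deriv x t) = 0) ∧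
        x t₀ = x₀ ∧ deriv x t₀ = v₀) ∧
      (∀ t ∈ ball t₀ δ, (velJacobian φ t (x t) (deriv x t)).rank = m) ∧
      (∀ (x' : ℝ → Fin n → ℝ) (lam' : ℝ → Fin m → ℝ),
        (ContDiffOn ℝ 2 x' (ball t₀ δ) ∧ ContinuousOn lam' (ball t₀ δ) ∧
          (∀ t ∈ ball t₀ δ,
            A (x' t) *ᵥ deriv (deriv x') t =
              F t (x' t) (deriv x' t) + (velJacobian φ t (x' t) (deriv x' t))ᵀ *ᵥ lam' t ∧
            φ t (x' t) (deriv x' t) = 0) ∧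
          x' t₀ = x₀ ∧ deriv x' t₀ = v₀) →
        ∀ t ∈ ball t₀ δ, x' t = x t ∧ lam' t = lam t) := by
  classical
  set p₀ : EE n := (t₀, x₀, v₀) with hp₀def
  have hφ' : ContDiffOn ℝ (⊤ : ℕ∞) (Phi φ) U := hφ
  have hmem' : p₀ ∈ U := hmem
  have hGp₀ : velJacobian φ t₀ x₀ v₀ = Gmat φ p₀ := velJacobian_eq_Gmat hU hφ' hmem'
  have hrank₀ : (Gmat φ p₀).rank = m := by rw [← hGp₀]; exact hrank
  have hsurj₀ := surjective_mulVec_of_rank _ hrank₀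
  have hdetM₀ : (Mmat A φ p₀).det ≠ 0 := by
    have hker : ∀ u : Fin n ⊕ Fin m → ℝ, Mmat A φ p₀ *ᵥ u = 0 → u = 0 := by
      intro u hu
      set z : Fin n → ℝ := fun i => u (Sum.inl i) with hz
      set μ : Fin m → ℝ := fun α => u (Sum.inr α) with hμ
      have huz : u = Sum.elim z μ := by funext k; cases k <;> rfl
      rw [huz, Mmat, Matrix.fromBlocks_mulVec] at hu
      have h1 : A p₀.2.1 *ᵥ z + (-(Gmat φ p₀)ᵀ) *ᵥ μ = 0 := by
        funext i; exact congrFun hu (Sum.inl i)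
      have h2 : Gmat φ p₀ *ᵥ z = 0 := by
        funext α
        have := congrFun hu (Sum.inr α)
        simpa [Matrix.zero_mulVec] using this
      rw [Matrix.neg_mulVec] at h1
      have h1' : A p₀.2.1 *ᵥ z = (Gmat φ p₀)ᵀ *ᵥ μ := add_neg_eq_zero.mp h1
      have hzAz : z ⬝ᵥ (A p₀.2.1 *ᵥ z) = 0 := by
        rw [h1', Matrix.dotProduct_mulVec, Matrix.vecMul_transpose, h2, zero_dotProduct]
      have hz0 : z = 0 := by
        by_contra hzne
        have hlt := hpos z hzne (by rw [hGp₀]; exact h2)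
        have : (0 : ℝ) < 0 := by
          calc (0 : ℝ) < z ⬝ᵥ (A x₀ *ᵥ z) := hlt
            _ = 0 := hzAz
        exact lt_irrefl 0 this
      have hμ0 : μ = 0 := by
        apply transpose_mulVec_eq_zero_of_surj hsurj₀
        rw [← h1', hz0, Matrix.mulVec_zero]
      rw [huz, hz0, hμ0]
      funext k; cases k <;> simp
    have hinj : Function.Injective (Mmat A φ p₀).mulVec := by
      intro u1 u2 h12
      have := hker (u1 - u2) (by rw [Matrix.mulVec_sub, h12, sub_self])
      exact sub_eq_zero.mp this
    exact ((Matrix.isUnit_iff_isUnit_det _).mp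
      (Matrix.mulVec_injective_iff_isUnit.mp hinj)).ne_zero
  have hdetP₀ : (Gmat φ p₀ * (Gmat φ p₀)ᵀ).det ≠ 0 := gram_det_ne_zero_of_rank _ hrank₀
  -- the good open set
  set W : Set (EE n) :=
    {p | p ∈ U ∧ (Mmat A φ p).det ≠ 0 ∧ (Gmat φ p * (Gmat φ p)ᵀ).det ≠ 0} with hWdef
  have hWU : W ⊆ U := fun p hp => hp.1
  have hWopen : IsOpen W := by
    have hMdet : ContinuousOn (fun p => (Mmat A φ p).det) U :=
      (contDiffOn_matrix_det (contDiffOn_Mmat_entry A hU hφ' hA)).continuousOn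
    have hPent : ∀ α β, ContDiffOn ℝ (⊤ : ℕ∞)
        (fun p => (Gmat φ p * (Gmat φ p)ᵀ) α β) U := by
      intro α β
      have heq : (fun p => (Gmat φ p * (Gmat φ p)ᵀ) α β)
          = fun p => ∑ k, Gmat φ p α k * Gmat φ p β k := by
        funext p; simp [Matrix.mul_apply]
      rw [heq]
      exact ContDiffOn.sum fun k _ =>
        (contDiffOn_Gmat_entry hU hφ' α k).mul (contDiffOn_Gmat_entry hU hφ' β k)
    have hPdet : ContinuousOn (fun p => (Gmat φ p * (Gmat φ p)ᵀ).det) U :=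
      (contDiffOn_matrix_det hPent).continuousOn
    have hWeq : W = U ∩ (fun p => ((Mmat A φ p).det, (Gmat φ p * (Gmat φ p)ᵀ).det)) ⁻¹'
        (({0}ᶜ : Set ℝ) ×ˢ ({0}ᶜ : Set ℝ)) := by
      ext p
      simp only [hWdef, Set.mem_setOf_eq, Set.mem_inter_iff, Set.mem_preimage, Set.mem_prod,
        Set.mem_compl_iff, Set.mem_singleton_iff]
    rw [hWeq]
    exact (hMdet.prodMk hPdet).isOpen_inter_preimage hU
      (isOpen_compl_singleton.prod isOpen_compl_singleton)
  have hp₀W : p₀ ∈ W := ⟨hmem', hdetM₀, hdetP₀⟩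
  have hdetW : ∀ p ∈ W, (Mmat A φ p).det ≠ 0 := fun p hp => hp.2.1
  -- smoothness of the reduced vector field
  have hgsm : ContDiffOn ℝ (⊤ : ℕ∞) (gvec A F φ) W := contDiffOn_gvec A F hU hφ' hA hF hWU hdetW
  have hfsm : ContDiffOn ℝ (⊤ : ℕ∞) (fvec A F φ) W :=
    contDiffOn_pi.mpr fun i => contDiffOn_solv A F hU hφ' hA hF hWU hdetW (Sum.inl i)
  have hlsm : ContDiffOn ℝ (⊤ : ℕ∞) (lamvec A F φ) W :=
    contDiffOn_pi.mpr fun α => contDiffOn_solv A F hU hφ' hA hF hWU hdetW (Sum.inr α)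
  have hgC1 : ContDiffAt ℝ 1 (gvec A F φ) p₀ :=
    (hgsm.contDiffAt (hWopen.mem_nhds hp₀W)).of_le (by exact_mod_cast le_top)
  obtain ⟨y, hy₀, ε, hε, hy⟩ := hgC1.exists_forall_mem_closedBall_exists_eq_forall_mem_Ioo_hasDerivAt₀ t₀
  -- choose δ
  have ht₀Ioo : t₀ ∈ Set.Ioo (t₀ - ε) (t₀ + ε) := by constructor <;> linarith
  have hycont₀ : ContinuousAt y t₀ := (hy t₀ ht₀Ioo).continuousAt
  have hyW' : ∀ᶠ t in nhds t₀, y t ∈ W := by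
    apply hycont₀.preimage_mem_nhds
    rw [hy₀]
    exact hWopen.mem_nhds hp₀W
  obtain ⟨δ₁, hδ₁, hball₁⟩ := Metric.mem_nhds_iff.mp hyW'
  set δ : ℝ := min δ₁ ε with hδdef
  have hδ : 0 < δ := lt_min hδ₁ hε
  set B : Set ℝ := ball t₀ δ with hBdef
  have hBsub : B ⊆ Set.Ioo (t₀ - ε) (t₀ + ε) := by
    rw [hBdef, Real.ball_eq_Ioo]
    have : δ ≤ ε := min_le_right δ₁ ε
    exact Set.Ioo_subset_Ioo (by linarith) (by linarith)
  have hyW : ∀ t ∈ B, y t ∈ W := fun t ht =>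
    hball₁ (ball_subset_ball (min_le_left δ₁ ε) ht)
  have hyd : ∀ t ∈ B, HasDerivAt y (gvec A F φ (y t)) t := fun t ht => hy t (hBsub ht)
  have ht₀B : t₀ ∈ B := mem_ball_self hδ
  -- components
  set x : ℝ → Fin n → ℝ := fun t => (y t).2.1 with hxdef
  set v : ℝ → Fin n → ℝ := fun t => (y t).2.2 with hvdef
  set lam : ℝ → Fin m → ℝ := fun t => lamvec A F φ (y t) with hlamdef
  -- first component of y is t
  have hy1 : ∀ t ∈ B, (y t).1 = t := by
    intro t ht
    have hw : ∀ s ∈ B, HasDerivAt (fun τ => (y τ).1 - τ) 0 s := by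
      intro s hs
      have h1 : HasDerivAt (fun τ => (y τ).1) (gvec A F φ (y s)).1 s := (hyd s hs).fst'
      have h2 : HasDerivAt (fun τ => (y τ).1 - τ) ((gvec A F φ (y s)).1 - 1) s :=
        h1.sub (hasDerivAt_id s)
      simpa [gvec] using h2
    have := eq_of_hasDerivAt_zero hw ht hδ
    have hyt₀1 : (y t₀).1 = t₀ := by rw [hy₀]
    simp only [hyt₀1, sub_self] at this
    linarith [sub_eq_zero.mp this]
  have hyx : ∀ t ∈ B, HasDerivAt x (v t) t := by
    intro t ht
    have := ((hyd t ht).snd').fst'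
    simpa [gvec, hxdef, hvdef] using this
  have hyv : ∀ t ∈ B, HasDerivAt v (fvec A F φ (y t)) t := by
    intro t ht
    have := ((hyd t ht).snd').snd'
    simpa [gvec, hvdef] using this
  have hxd : ∀ t ∈ B, deriv x t = v t := fun t ht => (hyx t ht).deriv
  have hyp : ∀ t ∈ B, y t = (t, x t, deriv x t) := by
    intro t ht
    refine Prod.ext (hy1 t ht) (Prod.ext rfl ?_)
    simp [hxd t ht, hvdef]
  -- second derivative identification
  have hdd : ∀ t ∈ B, deriv (deriv x) t = fvec A F φ (y t) := by
    intro t ht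
    have hev : deriv x =ᶠ[nhds t] v :=
      Filter.eventuallyEq_of_mem (isOpen_ball.mem_nhds ht) fun s hs => hxd s hs
    rw [hev.deriv_eq]
    exact (hyv t ht).deriv
  -- the constraint holds along the solution
  have hcons : ∀ t ∈ B, Phi φ (y t) = 0 := by
    intro t ht
    have hzero : ∀ s ∈ B, HasDerivAt (fun τ => Phi φ (y τ)) 0 s := by
      intro s hs
      have hdiffΦ : DifferentiableAt ℝ (Phi φ) (y s) :=
        (hφ'.contDiffAt (hU.mem_nhds (hWU (hyW s hs)))).differentiableAt (by norm_num)
      have hchain : HasDerivAt (fun τ => Phi φ (y τ))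
          (fderiv ℝ (Phi φ) (y s) (gvec A F φ (y s))) s :=
        hdiffΦ.hasFDerivAt.comp_hasDerivAt s (hyd s hs)
      have hsplit : fderiv ℝ (Phi φ) (y s) (gvec A F φ (y s)) = 0 := by
        have h1 := clm_split (fderiv ℝ (Phi φ) (y s)) (y s).2.2 (fvec A F φ (y s))
        have h2 : fderiv ℝ (Phi φ) (y s) ((1 : ℝ), (y s).2.2, (0 : Fin n → ℝ))
            = -cvec φ (y s) := by
          funext α; simp [cvec]
        have h3 : (Matrix.of fun α i =>
            fderiv ℝ (Phi φ) (y s) ((0 : ℝ), (0 : Fin n → ℝ), Pi.single i 1) α)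
            = Gmat φ (y s) := rfl
        have h4 := (Mmat_blocks A F (hdetW _ (hyW s hs))).2
        show fderiv ℝ (Phi φ) (y s) ((1 : ℝ), (y s).2.2, fvec A F φ (y s)) = 0
        rw [h1, h2, h3, h4]
        simp
      rw [← hsplit]
      exact hchain
    have := eq_of_hasDerivAt_zero hzero ht hδ
    rw [this, hy₀]
    exact hinit
  have hycontB : ContinuousOn y B := fun t ht => ((hyd t ht).continuousAt).continuousWithinAt
  have hvj : ∀ t ∈ B, velJacobian φ t (x t) (deriv x t) = Gmat φ (y t) := by
    intro t ht
    have h0 : ((t, x t, deriv x t) : EE n) ∈ U := by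
      rw [← hyp t ht]; exact hWU (hyW t ht)
    rw [hyp t ht]
    exact velJacobian_eq_Gmat hU hφ' h0
  have hvC1 : ContDiffOn ℝ 1 v B := by
    rw [show (1 : WithTop ℕ∞) = 0 + 1 by norm_num]
    refine (contDiffOn_succ_iff_deriv_of_isOpen isOpen_ball).mpr
      ⟨fun t ht => (hyv t ht).differentiableAt.differentiableWithinAt, ?_, ?_⟩
    · intro h; simp at h
    · rw [contDiffOn_zero]
      have hcont : ContinuousOn (fun t => fvec A F φ (y t)) B :=
        hfsm.continuousOn.comp hycontB fun t ht => hyW t ht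
      exact hcont.congr fun t ht => (hyv t ht).deriv
  have hx2 : ContDiffOn ℝ 2 x B := by
    rw [show (2 : WithTop ℕ∞) = 1 + 1 by norm_num]
    refine (contDiffOn_succ_iff_deriv_of_isOpen isOpen_ball).mpr
      ⟨fun t ht => (hyx t ht).differentiableAt.differentiableWithinAt, ?_, ?_⟩
    · intro h; simp at h
    · exact hvC1.congr fun t ht => hxd t ht
  have hlamc : ContinuousOn lam B :=
    hlsm.continuousOn.comp hycontB fun t ht => hyW t ht
  have heqs : ∀ t ∈ B,
      A (x t) *ᵥ deriv (deriv x) t =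
        F t (x t) (deriv x t) + (velJacobian φ t (x t) (deriv x t))ᵀ *ᵥ lam t ∧
      φ t (x t) (deriv x t) = 0 := by
    intro t ht
    constructor
    · rw [hdd t ht, hvj t ht]
      have hb := (Mmat_blocks A F (hdetW _ (hyW t ht))).1
      have key : F t (x t) (deriv x t) = F (y t).1 (y t).2.1 (y t).2.2 := by rw [hyp t ht]
      rw [key]
      exact hb
    · have key : Phi φ (y t) = φ t (x t) (deriv x t) := by rw [hyp t ht]; rfl
      rw [← key]
      exact hcons t ht
  have hrankB : ∀ t ∈ B, (velJacobian φ t (x t) (deriv x t)).rank = m := by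
    intro t ht
    rw [hvj t ht]
    exact rank_eq_of_gram_det (hyW t ht).2.2
  refine ⟨δ, hδ, x, lam, ⟨hx2, hlamc, heqs, ?_, ?_⟩, hrankB, ?_⟩
  · show (y t₀).2.1 = x₀
    rw [hy₀]
  · rw [hxd t₀ ht₀B]
    show (y t₀).2.2 = v₀
    rw [hy₀]
  -- uniqueness
  rintro x' lam' ⟨hx'2, hlam'c, heqs', hx'0, hv'0⟩
  have hx'diff : ∀ t ∈ B, HasDerivAt x' (deriv x' t) t := fun t ht =>
    ((hx'2.differentiableOn (by norm_num)).differentiableAt (isOpen_ball.mem_nhds ht)).hasDerivAt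
  have hv'C1 : ContDiffOn ℝ 1 (deriv x') B := by
    rw [show (2 : WithTop ℕ∞) = 1 + 1 by norm_num] at hx'2
    exact ((contDiffOn_succ_iff_deriv_of_isOpen isOpen_ball).mp hx'2).2.2
  have hv'diff : ∀ t ∈ B, HasDerivAt (deriv x') (deriv (deriv x') t) t := fun t ht =>
    ((hv'C1.differentiableOn (by norm_num)).differentiableAt (isOpen_ball.mem_nhds ht)).hasDerivAt
  have hv'cont : ContinuousOn (deriv x') B := hv'C1.continuousOn
  set y' : ℝ → EE n := fun t => (t, x' t, deriv x' t) with hy'def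
  have hy'cont : ContinuousOn y' B :=
    continuousOn_id.prodMk ((hx'2.continuousOn).prodMk hv'cont)
  have hy'₀ : y' t₀ = p₀ := by
    show ((t₀ : ℝ), x' t₀, deriv x' t₀) = p₀
    rw [hx'0, hv'0]
  have hkey : ∀ s ∈ B, y' s ∈ W →
      HasDerivAt y' (gvec A F φ (y' s)) s ∧ lam' s = lamvec A F φ (y' s) := by
    intro s hs hsW
    have hdy' : HasDerivAt y' ((1 : ℝ), deriv x' s, deriv (deriv x') s) s :=
      (hasDerivAt_id s).prodMk ((hx'diff s hs).prodMk (hv'diff s hs))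
    have hdiffΦ : DifferentiableAt ℝ (Phi φ) (y' s) :=
      (hφ'.contDiffAt (hU.mem_nhds (hWU hsW))).differentiableAt (by norm_num)
    have hchain : HasDerivAt (fun τ => Phi φ (y' τ))
        (fderiv ℝ (Phi φ) (y' s) ((1 : ℝ), deriv x' s, deriv (deriv x') s)) s :=
      hdiffΦ.hasFDerivAt.comp_hasDerivAt s hdy'
    have hzero : (fun τ => Phi φ (y' τ)) =ᶠ[nhds s] fun _ => (0 : Fin m → ℝ) := by
      refine Filter.eventuallyEq_of_mem (isOpen_ball.mem_nhds hs) fun τ hτ => ?_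
      exact (heqs' τ hτ).2
    have hD0 : fderiv ℝ (Phi φ) (y' s) ((1 : ℝ), deriv x' s, deriv (deriv x') s) = 0 := by
      rw [← hchain.deriv, hzero.deriv_eq]
      simp
    have hGc : Gmat φ (y' s) *ᵥ deriv (deriv x') s = cvec φ (y' s) := by
      have hs1 := clm_split (fderiv ℝ (Phi φ) (y' s)) (deriv x' s) (deriv (deriv x') s)
      have h2 : fderiv ℝ (Phi φ) (y' s) ((1 : ℝ), deriv x' s, (0 : Fin n → ℝ))
          = -cvec φ (y' s) := by
        funext α
        simp [cvec, hy'def]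
      have h3 : (Matrix.of fun α i =>
          fderiv ℝ (Phi φ) (y' s) ((0 : ℝ), (0 : Fin n → ℝ), Pi.single i 1) α)
          = Gmat φ (y' s) := rfl
      rw [hD0, h2, h3] at hs1
      have h4 : -cvec φ (y' s) + Gmat φ (y' s) *ᵥ deriv (deriv x') s = 0 := hs1.symm
      exact (neg_add_eq_zero.mp h4).symm
    have hvj' : velJacobian φ s (x' s) (deriv x' s) = Gmat φ (y' s) :=
      velJacobian_eq_Gmat hU hφ' (hWU hsW)
    have hA' : A (x' s) *ᵥ deriv (deriv x') s
        = F s (x' s) (deriv x' s) + (Gmat φ (y' s))ᵀ *ᵥ lam' s := by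
      have h5 := (heqs' s hs).1
      rw [hvj'] at h5
      exact h5
    have hKKT : Mmat A φ (y' s) *ᵥ Sum.elim (deriv (deriv x') s) (lam' s)
        = rvec F φ (y' s) := by
      rw [Mmat, Matrix.fromBlocks_mulVec]
      funext k
      cases k with
      | inl i =>
        show (A (x' s) *ᵥ deriv (deriv x') s + (-(Gmat φ (y' s))ᵀ) *ᵥ lam' s) i
          = F s (x' s) (deriv x' s) i
        have hi := congrFun hA' i
        simp only [Pi.add_apply] at hi
        rw [Matrix.neg_mulVec]
        simp only [Pi.add_apply, Pi.neg_apply]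
        rw [hi]
        ring
      | inr α =>
        show (Gmat φ (y' s) *ᵥ deriv (deriv x') s
          + (0 : Matrix (Fin m) (Fin m) ℝ) *ᵥ lam' s) α = cvec φ (y' s) α
        rw [Matrix.zero_mulVec]
        simp only [Pi.add_apply, Pi.zero_apply, add_zero]
        exact congrFun hGc α
    have husol := Mmat_unique A F (hdetW _ hsW) hKKT
    constructor
    · have hf' : deriv (deriv x') s = fvec A F φ (y' s) := by
        funext i; exact congrFun husol (Sum.inl i)
      rw [hf'] at hdy'
      exact hdy'
    · funext α; exact congrFun husol (Sum.inr α)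
  -- the agreement set is open and closed in the ball
  set S : Set ℝ := {t | t ∈ B ∧ y' t = y t} with hSdef
  have hS₀ : t₀ ∈ S := ⟨ht₀B, by rw [hy'₀, hy₀]⟩
  have hSopen : IsOpen S := by
    rw [Metric.isOpen_iff]
    rintro t₁ ⟨ht₁B, ht₁eq⟩
    have hgC1' : ContDiffAt ℝ 1 (gvec A F φ) (y t₁) :=
      (hgsm.contDiffAt (hWopen.mem_nhds (hyW t₁ ht₁B))).of_le (by exact_mod_cast le_top)
    obtain ⟨K, sset, hsset, hlip⟩ := hgC1'.exists_lipschitzOnWith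
    obtain ⟨ρ, hρ, hballρ⟩ := Metric.mem_nhds_iff.mp
      (Filter.inter_mem hsset (hWopen.mem_nhds (hyW t₁ ht₁B)))
    have hyc : ContinuousAt y t₁ := (hyd t₁ ht₁B).continuousAt
    have hy'c : ContinuousAt y' t₁ := hy'cont.continuousAt (isOpen_ball.mem_nhds ht₁B)
    have h1 : ∀ᶠ s in nhds t₁, y s ∈ ball (y t₁) ρ :=
      hyc.preimage_mem_nhds (ball_mem_nhds _ hρ)
    have h2 : ∀ᶠ s in nhds t₁, y' s ∈ ball (y t₁) ρ :=
      hy'c.preimage_mem_nhds (by rw [ht₁eq]; exact ball_mem_nhds _ hρ)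
    have h3 : ∀ᶠ s in nhds t₁, s ∈ B := isOpen_ball.mem_nhds ht₁B
    obtain ⟨η, hη, hhh⟩ := Metric.mem_nhds_iff.mp ((h1.and h2).and h3)
    refine ⟨η, hη, fun s hsb => ?_⟩
    have hsB : s ∈ B := (hhh hsb).2
    have huniq : Set.EqOn y y' (Set.Ioo (t₁ - η) (t₁ + η)) := by
      refine ODE_solution_unique_of_mem_Ioo
        (v := fun _ p => gvec A F φ p) (s := fun _ => ball (y t₁) ρ) (K := K)
        (fun _ _ => hlip.mono (hballρ.trans Set.inter_subset_left))
        (Set.mem_Ioo.mpr ⟨by linarith, by linarith⟩) ?_ ?_ ht₁eq.symm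
      · intro τ hτ
        have hτball : τ ∈ ball t₁ η := by
          rw [Real.ball_eq_Ioo]; exact hτ
        exact ⟨hyd τ (hhh hτball).2, ((hhh hτball).1).1⟩
      · intro τ hτ
        have hτball : τ ∈ ball t₁ η := by
          rw [Real.ball_eq_Ioo]; exact hτ
        have hy'W : y' τ ∈ W := (hballρ.trans Set.inter_subset_right) ((hhh hτball).1).2
        exact ⟨(hkey τ (hhh hτball).2 hy'W).1, ((hhh hτball).1).2⟩
    have : y s = y' s := huniq (by rw [← Real.ball_eq_Ioo]; exact hsb)
    exact ⟨hsB, this.symm⟩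
  have hagree : ∀ t ∈ B, y' t = y t := by
    by_contra hcon
    push_neg at hcon
    obtain ⟨t₂, ht₂B, ht₂ne⟩ := hcon
    set O₂ : Set ℝ := {t | t ∈ B ∧ y' t ≠ y t} with hO₂def
    have hO₂open : IsOpen O₂ := by
      have hcont2 : ContinuousOn (fun t => (y' t, y t)) B := hy'cont.prodMk hycontB
      have hOeq : O₂ = B ∩ (fun t => (y' t, y t)) ⁻¹' (Set.diagonal (EE n))ᶜ := by
        ext τ
        simp [hO₂def, Set.mem_diagonal_iff]
      rw [hOeq]
      exact hcont2.isOpen_inter_preimage isOpen_ball isClosed_diagonal.isOpen_compl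
    have hpre := (convex_ball t₀ δ).isPreconnected
    obtain ⟨t₃, ht₃⟩ := hpre S O₂ hSopen hO₂open
      (fun t ht => by
        by_cases hc : y' t = y t
        · exact Or.inl ⟨ht, hc⟩
        · exact Or.inr ⟨ht, hc⟩)
      ⟨t₀, ht₀B, hS₀⟩ ⟨t₂, ht₂B, ht₂B, ht₂ne⟩
    exact ht₃.2.2.2 ht₃.2.1.2
  intro t ht
  constructor
  · exact congrArg (fun q => q.2.1) (hagree t ht)
  · have hWt : y' t ∈ W := by rw [hagree t ht]; exact hyW t ht
    have := (hkey t ht hWt).2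
    rw [this, hagree t ht]
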